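/- Let f : ℂ → ℂ be entire (complex differentiable on all of ℂ) and map real numbers to real numbers. Then ∫_0^{π/2} Im[ f( (cos x) · e^{i x} ) ] dx = (1/2) · ∫_0^1 ( Re[f(ξ)] − Re[f(1/2)] ) / (ξ − 1/2) dξ, where the integrand on the right-hand side (which has a removable singularity at ξ = 1/2) is integrated over [0,1]. -/

import Mathlib

open Real MeasureTheory Complex in
private lemma aux_term10 (A : ℂ) (n : ℕ) :
    ∫ θ in (0:ℝ)..π, (A * (Complex.exp (θ*Complex.I)/2)^(n+1)).im
      = ∫ ξ in (0:ℝ)..1, (A * ((ξ:ℂ) - 1/2)^n).re := by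
  set k : ℝ := (n:ℝ) + 1 with hk
  have hk0 : k ≠ 0 := by positivity
  set C : ℝ := (1/2:ℝ)^(n+1) with hC
  have hFval : ∀ θ : ℝ, (A * (Complex.exp (θ*Complex.I)/2)^(n+1)).im
      = A.re * C * Real.sin (k*θ) + A.im * C * Real.cos (k*θ) := by
    intro θ
    have hw : (Complex.exp (↑θ*Complex.I)/2)^(n+1)
        = Complex.exp (((k * θ : ℝ)) * Complex.I) * ((C : ℝ) : ℂ) := by
      rw [div_pow, ← Complex.exp_nat_mul,
        show ((n+1:ℕ):ℂ) * (↑θ * Complex.I) = ((k * θ : ℝ):ℂ) * Complex.I by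
          rw [hk]; push_cast; ring]
      rw [hC]; push_cast; rw [one_div, inv_pow, div_eq_mul_inv]
    rw [hw, ← mul_assoc, Complex.im_mul_ofReal, Complex.mul_im,
      Complex.exp_ofReal_mul_I_re, Complex.exp_ofReal_mul_I_im]
    ring
  have hsin : ∫ θ in (0:ℝ)..π, Real.sin (k*θ) = (1 - (-1)^(n+1))/k := by
    rw [intervalIntegral.integral_comp_mul_left Real.sin hk0, integral_sin, mul_zero,
      Real.cos_zero, show k * π = ((n+1:ℕ):ℝ) * π by push_cast [hk]; ring,
      show Real.cos (((n+1:ℕ):ℝ) * π) = (-1)^(n+1) by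
        simpa using Real.cos_nat_mul_pi_sub 0 (n+1)]
    rw [smul_eq_mul]; field_simp
  have hcos : ∫ θ in (0:ℝ)..π, Real.cos (k*θ) = 0 := by
    rw [intervalIntegral.integral_comp_mul_left Real.cos hk0, integral_cos, mul_zero,
      Real.sin_zero, show k * π = ((n+1:ℕ):ℝ) * π by push_cast [hk]; ring,
      Real.sin_nat_mul_pi]
    simp
  have hGval : ∀ ξ : ℝ, (A * ((ξ:ℂ) - 1/2)^n).re = A.re * (ξ - 1/2)^n := by
    intro ξ
    rw [show ((ξ:ℂ) - 1/2) = ((ξ - 1/2 : ℝ) : ℂ) by push_cast; ring,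
      ← Complex.ofReal_pow, Complex.re_mul_ofReal]
  have hGint : ∫ ξ in (0:ℝ)..1, (ξ - 1/2)^n = ((1/2)^(n+1) - (-(1/2))^(n+1))/k := by
    rw [intervalIntegral.integral_comp_sub_right (fun x => x^n) (1/2)]
    norm_num [integral_pow, hk]
  have hc1 : Continuous fun θ : ℝ => A.re * C * Real.sin (k*θ) :=
    continuous_const.mul (Real.continuous_sin.comp (continuous_const.mul continuous_id))
  have hc2 : Continuous fun θ : ℝ => A.im * C * Real.cos (k*θ) :=
    continuous_const.mul (Real.continuous_cos.comp (continuous_const.mul continuous_id))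
  simp only [hFval, hGval]
  rw [intervalIntegral.integral_add (hc1.intervalIntegrable _ _) (hc2.intervalIntegrable _ _),
    intervalIntegral.integral_const_mul, intervalIntegral.integral_const_mul,
    intervalIntegral.integral_const_mul, hsin, hcos, hGint]
  rw [show (-(1/2:ℝ))^(n+1) = (-1)^(n+1) * (1/2)^(n+1) by rw [← neg_one_mul, mul_pow]]
  rw [hC]
  field_simp
  ring

set_option maxHeartbeats 1000000 in
open Real in
theorem statement_10 (f : ℂ → ℂ) (hf : Differentiable ℂ f)
    (hreal : ∀ x : ℝ, (f x).im = 0) :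
    ∫ x in (0 : ℝ)..(π / 2),
        (f ((Real.cos x : ℂ) * Complex.exp (Complex.I * x))).im =
      (1 / 2) * ∫ ξ in (0 : ℝ)..1,
        ((f ξ).re - (f (1 / 2)).re) / (ξ - 1 / 2) := by
  have hhalf : ((1/2 : ℝ) : ℂ) = (1/2 : ℂ) := by push_cast; ring
  have hg : Differentiable ℂ (dslope f (1/2)) := by
    rw [← differentiableOn_univ]
    exact (Complex.differentiableOn_dslope Filter.univ_mem).mpr hf.differentiableOn
  set g : ℂ → ℂ := dslope f (1/2) with hgdef
  have hpg : HasFPowerSeriesOnBall g (cauchyPowerSeries g (1/2) 1) (1/2) ⊤ :=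
    hg.hasFPowerSeriesOnBall (R := 1) (1/2) zero_lt_one
  set p : FormalMultilinearSeries ℂ ℂ ℂ := cauchyPowerSeries g (1/2) 1 with hpdef
  set a : ℕ → ℂ := fun n => p.coeff n with hadef
  -- the power series converges to g everywhere
  have hof : ∀ w : ℂ, HasSum (fun n => a n * w ^ n) (g (1/2 + w)) := by
    intro w
    have h1 := hpg.hasSum (y := w) (by simp [EMetric.mem_ball, edist_lt_top])
    have h2 : (fun n => p n fun _ => w) = fun n => a n * w ^ n := by
      funext n
      rw [p.apply_eq_pow_smul_coeff, smul_eq_mul, mul_comm]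
    rwa [h2] at h1
  -- summability of norms
  have hsummable : Summable (fun n => ‖p n‖ * (1/2:ℝ)^n) := by
    have h1 : ((1/2 : NNReal) : ENNReal) < p.radius := by
      rw [top_le_iff.mp hpg.r_le]; exact ENNReal.coe_lt_top
    have h2 := p.summable_norm_mul_pow h1
    simpa using h2
  -- uniform coefficient bound
  have hanorm : ∀ (n : ℕ) (w : ℂ), ‖w‖ ≤ 1/2 → ‖a n * w^n‖ ≤ ‖p n‖ * (1/2)^n := by
    intro n w hw
    have h1 : a n * w ^ n = p n (fun _ => w) := by
      rw [p.apply_eq_pow_smul_coeff, smul_eq_mul, mul_comm]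
    rw [h1]
    calc ‖p n fun _ => w‖ ≤ ‖p n‖ * ∏ _i : Fin n, ‖w‖ := (p n).le_opNorm _
      _ = ‖p n‖ * ‖w‖^n := by rw [Finset.prod_const]; simp
      _ ≤ ‖p n‖ * (1/2)^n := by gcongr
  -- the decomposition f z = f (1/2) + (z - 1/2) * g z
  have hfg : ∀ z : ℂ, f z = f (1/2) + (z - 1/2) * g z := by
    intro z
    have := sub_smul_dslope f (1/2) z
    rw [smul_eq_mul] at this
    linear_combination -this
  have hfc : (f (1/2 : ℂ)).im = 0 := by
    have := hreal (1/2)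
    rwa [hhalf] at this
  -- the parametrized curve
  set W : ℝ → ℂ := fun θ => Complex.exp (θ * Complex.I) / 2 with hWdef
  have hWnorm : ∀ θ : ℝ, ‖W θ‖ = 1/2 := by
    intro θ
    rw [hWdef]
    simp [map_div₀, Complex.norm_exp_ofReal_mul_I]
  have hpoint : ∀ x : ℝ, (Real.cos x : ℂ) * Complex.exp (Complex.I * x) = 1/2 + W (2*x) := by
    intro x
    have hE : Complex.exp ((x:ℂ) * Complex.I) ≠ 0 := Complex.exp_ne_zero _
    have h2 : ((2*x:ℝ):ℂ)*Complex.I = (x:ℂ)*Complex.I + (x:ℂ)*Complex.I := by push_cast; ring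
    rw [hWdef, Complex.ofReal_cos, Complex.cos]
    simp only
    rw [h2, Complex.exp_add, mul_comm Complex.I (x:ℂ), neg_mul, Complex.exp_neg]
    field_simp
    ring
  set u : ℝ → ℝ := fun θ => (W θ * g (1/2 + W θ)).im with hudef
  -- LHS reduction
  have hL1 : ∫ x in (0:ℝ)..(π/2), (f ((Real.cos x : ℂ) * Complex.exp (Complex.I * x))).im
      = ∫ x in (0:ℝ)..(π/2), u (2*x) := by
    apply intervalIntegral.integral_congr
    intro x _
    show (f ((Real.cos x : ℂ) * Complex.exp (Complex.I * x))).im = u (2*x)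
    rw [hpoint x, hfg, Complex.add_im, hfc, zero_add, add_sub_cancel_left, hudef]
  have hL2 : ∫ x in (0:ℝ)..(π/2), u (2*x) = (1/2) * ∫ θ in (0:ℝ)..π, u θ := by
    rw [intervalIntegral.integral_comp_mul_left u two_ne_zero, mul_zero,
      show (2:ℝ)*(π/2) = π by ring, smul_eq_mul]
    norm_num
  -- RHS reduction
  have hR1 : ∫ ξ in (0:ℝ)..1, ((f ξ).re - (f (1/2)).re) / (ξ - 1/2)
      = ∫ ξ in (0:ℝ)..1, (g ξ).re := by
    apply intervalIntegral.integral_congr_ae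
    have hae : ∀ᵐ x : ℝ, x ≠ (1/2 : ℝ) := by
      refine (MeasureTheory.ae_iff).mpr ?_
      simpa [not_not] using Real.volume_singleton (a := (1/2 : ℝ))
    filter_upwards [hae] with x hx _
    have hxc : (x : ℂ) ≠ 1/2 := by
      rw [← hhalf]
      exact fun h => hx (Complex.ofReal_injective h)
    rw [hgdef]
    rw [dslope_of_ne f hxc, slope_def_field,
      show ((x:ℂ) - 1/2) = ((x - 1/2 : ℝ) : ℂ) by push_cast; ring,
      Complex.div_ofReal_re, Complex.sub_re]
  rw [hL1, hL2, hR1]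
  congr 1
  -- series for the two integrands
  have hu : ∀ θ : ℝ, HasSum (fun n => (a n * (W θ)^(n+1)).im) (u θ) := by
    intro θ
    have h1 := (hof (W θ)).mul_left (W θ)
    have h2 : (fun n => W θ * (a n * (W θ)^n)) = fun n => a n * (W θ)^(n+1) := by
      funext n; ring
    rw [h2] at h1
    exact Complex.hasSum_im h1
  have hv : ∀ ξ : ℝ, HasSum (fun n => (a n * ((ξ:ℂ) - 1/2)^n).re) ((g ξ).re) := by
    intro ξ
    have h1 := hof ((ξ:ℂ) - 1/2)
    rw [add_sub_cancel] at h1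
    exact Complex.hasSum_re h1
  -- integrability of terms
  have hWcont : Continuous W := by
    rw [hWdef]; fun_prop
  have hFcont : ∀ n : ℕ, Continuous fun θ : ℝ => (a n * (W θ)^(n+1)).im := by
    intro n
    exact Complex.continuous_im.comp (continuous_const.mul (hWcont.pow _))
  have hGcont : ∀ n : ℕ, Continuous fun ξ : ℝ => (a n * ((ξ:ℂ) - 1/2)^n).re := by
    intro n
    exact Complex.continuous_re.comp
      (continuous_const.mul (((Complex.continuous_ofReal.sub continuous_const).pow _)))
  -- pointwise norm bounds
  have hFbound : ∀ (n : ℕ) (θ : ℝ), ‖(a n * (W θ)^(n+1)).im‖ ≤ ‖p n‖ * (1/2:ℝ)^n := by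
    intro n θ
    have h1 : ‖(a n * (W θ)^(n+1)).im‖ ≤ ‖a n * (W θ)^(n+1)‖ := by
      rw [Real.norm_eq_abs]
      exact Complex.abs_im_le_norm _
    refine h1.trans ?_
    rw [show a n * (W θ)^(n+1) = (a n * (W θ)^n) * W θ by ring, norm_mul, hWnorm]
    calc ‖a n * W θ ^ n‖ * (1/2) ≤ (‖p n‖ * (1/2:ℝ)^n) * (1/2) := by
          gcongr
          exact hanorm n _ (le_of_eq (hWnorm θ))
      _ ≤ ‖p n‖ * (1/2:ℝ)^n := by
          apply mul_le_of_le_one_right (by positivity)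
          norm_num
  have hGbound : ∀ (n : ℕ) (ξ : ℝ), ξ ∈ Set.Ioc (0:ℝ) 1 →
      ‖(a n * ((ξ:ℂ) - 1/2)^n).re‖ ≤ ‖p n‖ * (1/2:ℝ)^n := by
    intro n ξ hξ
    have h1 : ‖(a n * ((ξ:ℂ) - 1/2)^n).re‖ ≤ ‖a n * ((ξ:ℂ) - 1/2)^n‖ := by
      rw [Real.norm_eq_abs]
      exact Complex.abs_re_le_norm _
    refine h1.trans (hanorm n _ ?_)
    rw [show ((ξ:ℂ) - 1/2) = ((ξ - 1/2 : ℝ) : ℂ) by push_cast; ring, Complex.norm_real,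
      Real.norm_eq_abs]
    rw [abs_le]
    constructor <;> [linarith [hξ.1]; linarith [hξ.2]]
  -- interchange on the arc side
  have harc : ∫ θ in (0:ℝ)..π, u θ = ∑' n : ℕ, ∫ θ in Set.Ioc (0:ℝ) π, (a n * (W θ)^(n+1)).im := by
    rw [intervalIntegral.integral_of_le pi_nonneg]
    rw [show (∫ θ in Set.Ioc (0:ℝ) π, u θ)
        = ∫ θ in Set.Ioc (0:ℝ) π, ∑' n : ℕ, (a n * (W θ)^(n+1)).im from
      MeasureTheory.integral_congr_ae (Filter.Eventually.of_forall fun θ => ((hu θ).tsum_eq).symm)]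
    refine (MeasureTheory.integral_tsum_of_summable_integral_norm ?_ ?_).symm
    · intro n
      exact ((hFcont n).integrableOn_Ioc)
    · apply Summable.of_nonneg_of_le
        (fun n => MeasureTheory.integral_nonneg fun θ => norm_nonneg _) ?_ (hsummable.mul_left π)
      intro n
      have hvol : MeasureTheory.volume (Set.Ioc (0:ℝ) π) < ⊤ := by
        rw [Real.volume_Ioc]; exact ENNReal.ofReal_lt_top
      calc (∫ θ in Set.Ioc (0:ℝ) π, ‖(a n * (W θ)^(n+1)).im‖)
          ≤ ‖∫ θ in Set.Ioc (0:ℝ) π, ‖(a n * (W θ)^(n+1)).im‖‖ := le_abs_self _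
        _ ≤ (‖p n‖ * (1/2:ℝ)^n) * (MeasureTheory.volume (Set.Ioc (0:ℝ) π)).toReal := by
            refine MeasureTheory.norm_setIntegral_le_of_norm_le_const hvol
              (fun θ _ => ?_)
            · rw [norm_norm]; exact hFbound n θ
        _ = π * (‖p n‖ * (1/2:ℝ)^n) := by
            rw [Real.volume_Ioc, sub_zero, ENNReal.toReal_ofReal pi_nonneg]
            ring
  -- interchange on the segment side
  have hseg : ∫ ξ in (0:ℝ)..1, (g ξ).re
      = ∑' n : ℕ, ∫ ξ in Set.Ioc (0:ℝ) 1, (a n * ((ξ:ℂ) - 1/2)^n).re := by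
    rw [intervalIntegral.integral_of_le zero_le_one]
    rw [show (∫ ξ in Set.Ioc (0:ℝ) 1, (g ξ).re)
        = ∫ ξ in Set.Ioc (0:ℝ) 1, ∑' n : ℕ, (a n * ((ξ:ℂ) - 1/2)^n).re from
      MeasureTheory.integral_congr_ae (Filter.Eventually.of_forall fun ξ => ((hv ξ).tsum_eq).symm)]
    refine (MeasureTheory.integral_tsum_of_summable_integral_norm ?_ ?_).symm
    · intro n
      exact ((hGcont n).integrableOn_Ioc)
    · apply Summable.of_nonneg_of_le
        (fun n => MeasureTheory.integral_nonneg fun θ => norm_nonneg _) ?_ hsummable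
      intro n
      have hvol : MeasureTheory.volume (Set.Ioc (0:ℝ) 1) < ⊤ := by
        rw [Real.volume_Ioc]; exact ENNReal.ofReal_lt_top
      calc (∫ ξ in Set.Ioc (0:ℝ) 1, ‖(a n * ((ξ:ℂ) - 1/2)^n).re‖)
          ≤ ‖∫ ξ in Set.Ioc (0:ℝ) 1, ‖(a n * ((ξ:ℂ) - 1/2)^n).re‖‖ := le_abs_self _
        _ ≤ (‖p n‖ * (1/2:ℝ)^n) * (MeasureTheory.volume (Set.Ioc (0:ℝ) 1)).toReal := by
            refine MeasureTheory.norm_setIntegral_le_of_norm_le_const hvol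
              (fun ξ hξ => ?_)
            · rw [norm_norm]; exact hGbound n ξ hξ
        _ = ‖p n‖ * (1/2:ℝ)^n := by
            rw [Real.volume_Ioc]
            norm_num
  rw [harc, hseg]
  apply tsum_congr
  intro n
  rw [← intervalIntegral.integral_of_le pi_nonneg, ← intervalIntegral.integral_of_le zero_le_one]
  exact aux_term10 (a n) n
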